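/- For the star $K_{1,n-1}$ with $n \geq 4$, the node reliability equals $p + (n-1)p(1-p)^{n-1}$, its second derivative equals $(n-1)^2(np-2)(1-p)^{n-3}$, and consequently $\mathrm{nRel}(K_{1,n-1};p)$ is concave down on $(0, 2/n)$ and concave up on $(2/n, 1)$, with a unique inflection point at $p = 2/n$. -/

import Mathlib

open Finset
open scoped Classical

/-- The node reliability polynomial of a graph `G`: the probability that the set of
operational nodes is nonempty and induces a connected subgraph, when each node
operates independently with probability `p`. -/
noncomputable def nRel {V : Type*} [Fintype V] (G : SimpleGraph V) (p : ℝ) : ℝ :=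
  ∑ s : Finset V, if (G.induce (s : Set V)).Connected
    then p ^ s.card * (1 - p) ^ (Fintype.card V - s.card) else 0

/-- `cCount G k` is the number of `k`-element vertex subsets of `G` inducing a
connected subgraph (note: `SimpleGraph.Connected` requires nonemptiness). -/
noncomputable def cCount {V : Type*} [Fintype V] (G : SimpleGraph V) (k : ℕ) : ℕ :=
  ((Finset.univ : Finset (Finset V)).filter
    (fun s : Finset V => s.card = k ∧ (G.induce (s : Set V)).Connected)).card

/-! ### Auxiliary lemmas -/

lemma starAux_binom_sum {α : Type*} [DecidableEq α] (p q : ℝ) (A : Finset α) :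
    ∑ t ∈ A.powerset, p ^ t.card * q ^ (A.card - t.card) = (p + q) ^ A.card := by
  induction A using Finset.induction_on with
  | empty => simp
  | @insert a A ha ih =>
    rw [Finset.sum_powerset_insert ha, Finset.card_insert_of_notMem ha]
    have h1 : ∑ t ∈ A.powerset, p ^ t.card * q ^ (A.card + 1 - t.card)
        = q * ∑ t ∈ A.powerset, p ^ t.card * q ^ (A.card - t.card) := by
      rw [Finset.mul_sum]
      refine Finset.sum_congr rfl fun t ht => ?_
      have hle := Finset.card_le_card (Finset.mem_powerset.mp ht)
      rw [show A.card + 1 - t.card = (A.card - t.card) + 1 by omega, pow_succ]; ring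
    have h2 : ∑ t ∈ A.powerset, p ^ (insert a t).card * q ^ (A.card + 1 - (insert a t).card)
        = p * ∑ t ∈ A.powerset, p ^ t.card * q ^ (A.card - t.card) := by
      rw [Finset.mul_sum]
      refine Finset.sum_congr rfl fun t ht => ?_
      have hat : a ∉ t := fun h => ha (Finset.mem_powerset.mp ht h)
      have hle := Finset.card_le_card (Finset.mem_powerset.mp ht)
      rw [Finset.card_insert_of_notMem hat,
        show A.card + 1 - (t.card + 1) = A.card - t.card by omega, pow_succ]; ring
    rw [h1, h2, ih, pow_succ]; ring

lemma starAux_conn {n : ℕ} (hn : 4 ≤ n) (G : SimpleGraph (Fin n))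
    (hG : ∀ u v, G.Adj u v ↔ u ≠ v ∧ (u.val = 0 ∨ v.val = 0))
    (z : Fin n) (hz : z.val = 0) (s : Finset (Fin n)) :
    (G.induce (s : Set (Fin n))).Connected ↔ z ∈ s ∨ s.card = 1 := by
  constructor
  · intro hc
    by_cases hzs : z ∈ s
    · exact Or.inl hzs
    · right
      have hne : s.Nonempty := by
        obtain ⟨⟨v, hv⟩⟩ := hc.nonempty
        exact ⟨v, by simpa using hv⟩
      by_contra hcard
      have h2 : 2 ≤ s.card := by
        have := Finset.card_pos.mpr hne; omega
      obtain ⟨u, hu, v, hv, huv⟩ := Finset.one_lt_card.mp h2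
      have hbot : (G.induce (s : Set (Fin n))) = ⊥ := by
        ext a b
        simp only [SimpleGraph.comap_adj, SimpleGraph.bot_adj, iff_false]
        intro hadj
        obtain ⟨-, h0⟩ := (hG _ _).mp hadj
        rcases h0 with h0 | h0
        · have hza : z = (a : Fin n) := Fin.ext (by rw [hz]; exact h0.symm)
          exact hzs (by rw [hza]; simpa using a.2)
        · have hzb : z = (b : Fin n) := Fin.ext (by rw [hz]; exact h0.symm)
          exact hzs (by rw [hzb]; simpa using b.2)
      have hr := hc.preconnected ⟨u, by simpa using hu⟩ ⟨v, by simpa using hv⟩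
      rw [hbot, SimpleGraph.reachable_bot] at hr
      exact huv (by simpa using congrArg Subtype.val hr)
  · rintro (hzs | hcard)
    · rw [SimpleGraph.connected_iff]
      refine ⟨?_, ⟨⟨z, by simpa using hzs⟩⟩⟩
      rintro ⟨u, hu⟩ ⟨v, hv⟩
      have key : ∀ (x : Fin n) (hx : x ∈ s),
          (G.induce (s : Set (Fin n))).Reachable ⟨x, by simpa using hx⟩
            ⟨z, by simpa using hzs⟩ := by
        intro x hx
        by_cases hx0 : x = z
        · subst hx0; exact SimpleGraph.Reachable.refl _
        · refine SimpleGraph.Adj.reachable ?_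
          rw [SimpleGraph.comap_adj]
          exact (hG _ _).mpr ⟨hx0, Or.inr hz⟩
      exact (key u (by simpa using hu)).trans (key v (by simpa using hv)).symm
    · obtain ⟨a, rfl⟩ := Finset.card_eq_one.mp hcard
      rw [SimpleGraph.connected_iff]
      refine ⟨?_, ⟨⟨a, by simp⟩⟩⟩
      rintro ⟨u, hu⟩ ⟨v, hv⟩
      have : u = v := by
        simp only [Finset.coe_singleton, Set.mem_singleton_iff] at hu hv
        rw [hu, hv]
      subst this
      rfl

lemma starAux_sumA (n : ℕ) (z : Fin n) (p : ℝ) :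
    ∑ s : Finset (Fin n), (if z ∈ s then p ^ s.card * (1 - p) ^ (n - s.card) else 0) = p := by
  rw [Finset.sum_ite, Finset.sum_const_zero, add_zero]
  have key : ∑ s ∈ Finset.univ.filter (fun s : Finset (Fin n) => z ∈ s),
      p ^ s.card * (1 - p) ^ (n - s.card)
      = ∑ t ∈ (Finset.univ.erase z).powerset,
        p * (p ^ t.card * (1 - p) ^ ((Finset.univ.erase z).card - t.card)) := by
    refine Finset.sum_nbij' (fun s => s.erase z) (fun t => insert z t) ?_ ?_ ?_ ?_ ?_
    · intro s hs
      rw [Finset.mem_powerset]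
      exact Finset.erase_subset_erase z (Finset.subset_univ s)
    · intro t ht; simp
    · intro s hs
      exact Finset.insert_erase (Finset.mem_filter.mp hs).2
    · intro t ht
      exact Finset.erase_insert (fun h => by
        have := Finset.mem_powerset.mp ht h
        simp at this)
    · intro s hs
      have hzs := (Finset.mem_filter.mp hs).2
      have hc1 : 1 ≤ s.card := Finset.card_pos.mpr ⟨z, hzs⟩
      have hcn : s.card ≤ n := by
        simpa using Finset.card_le_card (Finset.subset_univ s)
      rw [Finset.card_erase_of_mem hzs, Finset.card_erase_of_mem (Finset.mem_univ z),
        Finset.card_univ, Fintype.card_fin,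
        show n - 1 - (s.card - 1) = n - s.card by omega, ← mul_assoc, ← pow_succ',
        show s.card - 1 + 1 = s.card by omega]
  rw [key, ← Finset.mul_sum, starAux_binom_sum]
  simp

lemma starAux_sumB (n : ℕ) (hn : 1 ≤ n) (z : Fin n) (p : ℝ) :
    ∑ s : Finset (Fin n),
      (if s.card = 1 ∧ z ∉ s then p ^ s.card * (1 - p) ^ (n - s.card) else 0)
      = ((n : ℝ) - 1) * (p * (1 - p) ^ (n - 1)) := by
  rw [Finset.sum_ite, Finset.sum_const_zero, add_zero]
  have himg : Finset.univ.filter (fun s : Finset (Fin n) => s.card = 1 ∧ z ∉ s)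
      = (Finset.univ.erase z).image (fun a => ({a} : Finset (Fin n))) := by
    ext t
    simp only [Finset.mem_filter, Finset.mem_univ, true_and, Finset.mem_image,
      Finset.mem_erase]
    constructor
    · rintro ⟨hc, hzt⟩
      obtain ⟨a, rfl⟩ := Finset.card_eq_one.mp hc
      exact ⟨a, ⟨fun h => hzt (h ▸ Finset.mem_singleton_self a), trivial⟩, rfl⟩
    · rintro ⟨a, ⟨haz, -⟩, rfl⟩
      exact ⟨Finset.card_singleton a, fun h => haz ((Finset.mem_singleton.mp h).symm)⟩
  rw [himg, Finset.sum_image (fun a _ b _ h => Finset.singleton_injective h)]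
  have : ∀ a ∈ Finset.univ.erase z,
      p ^ ({a} : Finset (Fin n)).card * (1 - p) ^ (n - ({a} : Finset (Fin n)).card)
        = p * (1 - p) ^ (n - 1) := by
    intro a _; rw [Finset.card_singleton, pow_one]
  rw [Finset.sum_congr rfl this, Finset.sum_const,
    Finset.card_erase_of_mem (Finset.mem_univ z), Finset.card_univ, Fintype.card_fin,
    nsmul_eq_mul, Nat.cast_sub hn, Nat.cast_one]

lemma starAux_deriv1 (c : ℝ) (k : ℕ) (p : ℝ) :
    HasDerivAt (fun p : ℝ => p + c * (p * (1 - p) ^ (k + 3)))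
      (1 + c * ((1 - p) ^ (k + 3) - (k + 3 : ℝ) * (p * (1 - p) ^ (k + 2)))) p := by
  have h0 : HasDerivAt (fun p : ℝ => 1 - p) (-1) p := (hasDerivAt_id p).const_sub 1
  have hpow : HasDerivAt (fun p : ℝ => (1 - p) ^ (k + 3))
      (((k + 3 : ℕ) : ℝ) * (1 - p) ^ (k + 2) * (-1)) p :=
    (hasDerivAt_pow (k + 3) (1 - p)).comp p h0
  have hmul := (hasDerivAt_id p).mul hpow
  have := (hasDerivAt_id p).add (hmul.const_mul c)
  refine this.congr_deriv ?_
  simp only [id_eq]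
  push_cast
  ring

lemma starAux_deriv2 (c : ℝ) (k : ℕ) (p : ℝ) :
    HasDerivAt
      (fun p : ℝ => 1 + c * ((1 - p) ^ (k + 3) - (k + 3 : ℝ) * (p * (1 - p) ^ (k + 2))))
      (c * (k + 3) * ((k + 4) * p - 2) * (1 - p) ^ (k + 1)) p := by
  have h0 : HasDerivAt (fun p : ℝ => 1 - p) (-1) p := (hasDerivAt_id p).const_sub 1
  have hpow3 : HasDerivAt (fun p : ℝ => (1 - p) ^ (k + 3))
      (((k + 3 : ℕ) : ℝ) * (1 - p) ^ (k + 2) * (-1)) p :=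
    (hasDerivAt_pow (k + 3) (1 - p)).comp p h0
  have hpow2 : HasDerivAt (fun p : ℝ => (1 - p) ^ (k + 2))
      (((k + 2 : ℕ) : ℝ) * (1 - p) ^ (k + 1) * (-1)) p :=
    (hasDerivAt_pow (k + 2) (1 - p)).comp p h0
  have hmul := (hasDerivAt_id p).mul hpow2
  have hin := (hpow3.sub (hmul.const_mul ((k : ℝ) + 3))).const_mul c
  have := (hasDerivAt_const p (1:ℝ)).add hin
  refine this.congr_deriv ?_
  have e2 : ((1:ℝ) - p) ^ (k + 2) = (1 - p) ^ (k + 1) * (1 - p) := by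
    rw [← pow_succ]
  rw [e2]
  simp only [id_eq]
  push_cast
  ring

theorem stmt11 (n : ℕ) (hn : 4 ≤ n) (G : SimpleGraph (Fin n))
    (hG : ∀ u v, G.Adj u v ↔ u ≠ v ∧ (u.val = 0 ∨ v.val = 0)) :
    (∀ p : ℝ, nRel G p = p + (n - 1) * p * (1 - p) ^ (n - 1)) ∧
    (∀ p : ℝ, iteratedDeriv 2 (nRel G) p =
      ((n:ℝ) - 1) ^ 2 * (n * p - 2) * (1 - p) ^ (n - 3)) ∧
    (∀ p ∈ Set.Ioo (0:ℝ) (2 / n), iteratedDeriv 2 (nRel G) p < 0) ∧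
    (∀ p ∈ Set.Ioo ((2:ℝ) / n) 1, 0 < iteratedDeriv 2 (nRel G) p) ∧
    iteratedDeriv 2 (nRel G) (2 / n) = 0 := by
  obtain ⟨k, rfl⟩ : ∃ k, n = k + 4 := ⟨n - 4, by omega⟩
  have hn1 : 1 ≤ k + 4 := by omega
  have hz0 : (0:ℕ) < k + 4 := by omega
  set z : Fin (k + 4) := ⟨0, hz0⟩ with hzdef
  have hz : z.val = 0 := rfl
  -- Part 1: formula for nRel
  have part1 : ∀ p : ℝ, nRel G p = p + (((k+4:ℕ):ℝ) - 1) * p * (1 - p) ^ (k + 4 - 1) := by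
    intro p
    unfold nRel
    simp only [Fintype.card_fin]
    have hsplit : ∀ s : Finset (Fin (k + 4)),
        (if (G.induce (s : Set (Fin (k + 4)))).Connected
          then p ^ s.card * (1 - p) ^ (k + 4 - s.card) else 0)
        = (if z ∈ s then p ^ s.card * (1 - p) ^ (k + 4 - s.card) else 0)
          + (if s.card = 1 ∧ z ∉ s then p ^ s.card * (1 - p) ^ (k + 4 - s.card) else 0) := by
      intro s
      have hcnd := starAux_conn hn G hG z hz s
      by_cases h1 : z ∈ s <;> by_cases h2 : s.card = 1 <;> simp [hcnd, h1, h2]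
    rw [Finset.sum_congr rfl fun s _ => hsplit s, Finset.sum_add_distrib,
      starAux_sumA (k + 4) z p, starAux_sumB (k + 4) hn1 z p]
    ring
  -- function-level formula, with nice exponents
  have hfun : nRel G = fun p : ℝ => p + ((k:ℝ) + 3) * (p * (1 - p) ^ (k + 3)) := by
    funext p
    rw [part1 p]
    have h1 : k + 4 - 1 = k + 3 := by omega
    rw [h1]
    push_cast
    ring
  set c : ℝ := (k : ℝ) + 3 with hcdef
  have hd1 : deriv (nRel G)
      = fun p : ℝ => 1 + c * ((1 - p) ^ (k + 3) - (k + 3 : ℝ) * (p * (1 - p) ^ (k + 2))) := by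
    funext p
    rw [hfun]
    exact (starAux_deriv1 c k p).deriv
  have part2 : ∀ p : ℝ, iteratedDeriv 2 (nRel G) p =
      (((k+4:ℕ):ℝ) - 1) ^ 2 * (((k+4:ℕ):ℝ) * p - 2) * (1 - p) ^ (k + 4 - 3) := by
    intro p
    rw [show (2:ℕ) = 1 + 1 from rfl, iteratedDeriv_succ, iteratedDeriv_one, hd1,
      (starAux_deriv2 c k p).deriv]
    have h3 : k + 4 - 3 = k + 1 := by omega
    rw [h3, hcdef]
    push_cast
    ring
  have hNpos : (0:ℝ) < ((k+4:ℕ):ℝ) := by positivity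
  have hN4 : (4:ℝ) ≤ ((k+4:ℕ):ℝ) := by push_cast; linarith [Nat.cast_nonneg (α := ℝ) k]
  have hsq : (0:ℝ) < (((k+4:ℕ):ℝ) - 1) ^ 2 := by nlinarith
  refine ⟨part1, part2, ?_, ?_, ?_⟩
  · rintro p ⟨hp0, hp2⟩
    rw [part2 p]
    have hmid : ((k+4:ℕ):ℝ) * p - 2 < 0 := by
      have := (lt_div_iff₀ hNpos).mp hp2
      linarith
    have hp1 : p < 1 := by
      have h1 : (2:ℝ) / ((k+4:ℕ):ℝ) ≤ 1 := by
        rw [div_le_one hNpos]; linarith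
      linarith
    have hpow : (0:ℝ) < (1 - p) ^ (k + 4 - 3) := by
      apply pow_pos; linarith
    exact mul_neg_of_neg_of_pos (mul_neg_of_pos_of_neg hsq hmid) hpow
  · rintro p ⟨hp2, hp1⟩
    rw [part2 p]
    have hmid : (0:ℝ) < ((k+4:ℕ):ℝ) * p - 2 := by
      have := (div_lt_iff₀ hNpos).mp hp2
      linarith
    have hpow : (0:ℝ) < (1 - p) ^ (k + 4 - 3) := by
      apply pow_pos; linarith
    exact mul_pos (mul_pos hsq hmid) hpow
  · rw [part2 (2 / ((k+4:ℕ):ℝ))]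
    have h2 : ((k+4:ℕ):ℝ) * (2 / ((k+4:ℕ):ℝ)) - 2 = 0 := by
      field_simp
      ring
    rw [h2, mul_zero, zero_mul]
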